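/- Let k ≥ 2 and let (ϑ_n)_{n≥1} be a real sequence. Suppose there is a strictly increasing sequence (N_m)_{m≥1} of positive integers with N_{m+1}/N_m → 1 as m → ∞, such that for every smooth compactly supported f : ℝ^{k−1} → ℝ one has R_k(f,(ϑ_n),N_m) → ∫_{ℝ^{k−1}} f(x) dx as m → ∞. Then for every smooth compactly supported f : ℝ^{k−1} → ℝ, R_k(f,(ϑ_n),N) → ∫_{ℝ^{k−1}} f(x) dx as N → ∞; moreover the same convergence holds when f is the indicator function 1_Π of any box Π = [a_1,b_1] × ⋯ × [a_{k−1},b_{k−1}] ⊆ ℝ^{k−1}. -/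

import Mathlib

open MeasureTheory Filter Finset

/-- The set of `k`-tuples of pairwise distinct integers in `[1,N]`. -/
def Xk (k N : ℕ) : Finset (Fin k → ℕ) :=
  (Fintype.piFinset fun _ => Finset.Icc 1 N).filter Function.Injective

/-- The `k`-level correlation sum `R_k(f, (ϑ_n), N)`. -/
noncomputable def corrSum (k : ℕ) (f : (Fin (k - 1) → ℝ) → ℝ) (ϑ : ℕ → ℝ) (N : ℕ) : ℝ :=
  (N : ℝ)⁻¹ * ∑ x ∈ Xk k N, ∑' m : Fin (k - 1) → ℤ,
    f fun i => (N : ℝ) *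
      ((ϑ (x ⟨i.1, by have := i.2; omega⟩) - ϑ (x ⟨i.1 + 1, by have := i.2; omega⟩)) - (m i : ℝ))

namespace CorrAux

/-- The difference vector. -/
noncomputable def dd (k : ℕ) (ϑ : ℕ → ℝ) (x : Fin k → ℕ) (i : Fin (k - 1)) : ℝ :=
  ϑ (x ⟨i.1, by have := i.2; omega⟩) - ϑ (x ⟨i.1 + 1, by have := i.2; omega⟩)

/-- One term of the correlation sum. -/
noncomputable def term (k : ℕ) (f : (Fin (k - 1) → ℝ) → ℝ) (ϑ : ℕ → ℝ) (N : ℕ)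
    (x : Fin k → ℕ) (m : Fin (k - 1) → ℤ) : ℝ :=
  f fun i => (N : ℝ) * (dd k ϑ x i - (m i : ℝ))

noncomputable def S (k : ℕ) (f : (Fin (k - 1) → ℝ) → ℝ) (ϑ : ℕ → ℝ) (N : ℕ) : ℝ :=
  ∑ x ∈ Xk k N, ∑' m : Fin (k - 1) → ℤ, term k f ϑ N x m

lemma corrSum_eq (k : ℕ) (f : (Fin (k - 1) → ℝ) → ℝ) (ϑ : ℕ → ℝ) (N : ℕ) :
    corrSum k f ϑ N = (N : ℝ)⁻¹ * S k f ϑ N := rfl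

lemma Xk_mono (k : ℕ) {N M : ℕ} (h : N ≤ M) : Xk k N ⊆ Xk k M :=
  Finset.filter_subset_filter _ (Fintype.piFinset_subset _ _ fun _ => Finset.Icc_subset_Icc le_rfl h)

lemma summable_term {k : ℕ} {f : (Fin (k - 1) → ℝ) → ℝ} {R : ℝ}
    (hR : ∀ z : Fin (k - 1) → ℝ, R < ‖z‖ → f z = 0) (ϑ : ℕ → ℝ) {N : ℕ} (hN : 1 ≤ N)
    (x : Fin k → ℕ) : Summable (term k f ϑ N x) := by
  apply summable_of_ne_finset_zero
    (s := Fintype.piFinset fun i => Finset.Icc (-(⌈|dd k ϑ x i|⌉ + ⌈R⌉ + 1)) (⌈|dd k ϑ x i|⌉ + ⌈R⌉ + 1))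
  intro m hm
  rw [Fintype.mem_piFinset] at hm
  push_neg at hm
  obtain ⟨i, hi⟩ := hm
  by_contra hne
  have hz : ‖fun j => (N : ℝ) * (dd k ϑ x j - (m j : ℝ))‖ ≤ R := by
    by_contra hgt
    exact hne (hR _ (lt_of_not_ge hgt))
  have h1 : |(N : ℝ) * (dd k ϑ x i - (m i : ℝ))| ≤ R := by
    have h := (norm_le_pi_norm (fun j => (N : ℝ) * (dd k ϑ x j - (m j : ℝ))) i).trans hz
    rwa [Real.norm_eq_abs] at h
  have hN1 : (1 : ℝ) ≤ (N : ℝ) := by exact_mod_cast hN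
  have h2 : |dd k ϑ x i - (m i : ℝ)| ≤ R := by
    rw [abs_mul, abs_of_nonneg (by linarith : (0:ℝ) ≤ (N:ℝ))] at h1
    nlinarith [abs_nonneg (dd k ϑ x i - (m i : ℝ))]
  have h3 : |(m i : ℝ)| ≤ |dd k ϑ x i| + R := by
    have := abs_sub_abs_le_abs_sub (m i : ℝ) (dd k ϑ x i)
    rw [abs_sub_comm] at h2
    nlinarith [abs_sub (m i : ℝ) (dd k ϑ x i)]
  have hub : ((m i : ℝ)) ≤ ((⌈|dd k ϑ x i|⌉ + ⌈R⌉ + 1 : ℤ) : ℝ) := by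
    push_cast
    have := Int.le_ceil |dd k ϑ x i|
    have := Int.le_ceil R
    have := le_abs_self (m i : ℝ)
    linarith
  have hlb : ((-(⌈|dd k ϑ x i|⌉ + ⌈R⌉ + 1) : ℤ) : ℝ) ≤ ((m i : ℝ)) := by
    push_cast
    have := Int.le_ceil |dd k ϑ x i|
    have := Int.le_ceil R
    have := neg_abs_le (m i : ℝ)
    linarith
  exact hi (Finset.mem_Icc.2 ⟨by exact_mod_cast hlb, by exact_mod_cast hub⟩)

lemma S_le {k : ℕ} {f g : (Fin (k - 1) → ℝ) → ℝ} {ϑ : ℕ → ℝ} {N M : ℕ} (hNM : N ≤ M)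
    (hpt : ∀ x m, term k f ϑ N x m ≤ term k g ϑ M x m)
    (hg0 : ∀ x m, 0 ≤ term k g ϑ M x m)
    (hsf : ∀ x, Summable (term k f ϑ N x))
    (hsg : ∀ x, Summable (term k g ϑ M x)) :
    S k f ϑ N ≤ S k g ϑ M :=
  calc S k f ϑ N ≤ ∑ x ∈ Xk k N, ∑' m, term k g ϑ M x m :=
        Finset.sum_le_sum fun x _ => Summable.tsum_le_tsum (hpt x) (hsf x) (hsg x)
    _ ≤ S k g ϑ M := Finset.sum_le_sum_of_subset_of_nonneg (Xk_mono k hNM)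
        fun x _ _ => tsum_nonneg (hg0 x)

lemma corrSum_nonneg {k : ℕ} {f : (Fin (k - 1) → ℝ) → ℝ} (h0 : ∀ z, 0 ≤ f z)
    (ϑ : ℕ → ℝ) (N : ℕ) : 0 ≤ corrSum k f ϑ N := by
  rw [corrSum_eq]
  refine mul_nonneg (by positivity) (Finset.sum_nonneg fun x _ => tsum_nonneg fun m => h0 _)

lemma corrSum_add {k : ℕ} {f g : (Fin (k - 1) → ℝ) → ℝ} {ϑ : ℕ → ℝ} {N : ℕ}
    (hf : ∀ x, Summable (term k f ϑ N x)) (hg : ∀ x, Summable (term k g ϑ N x)) :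
    corrSum k (fun z => f z + g z) ϑ N = corrSum k f ϑ N + corrSum k g ϑ N := by
  simp only [corrSum_eq, S, ← mul_add, ← Finset.sum_add_distrib]
  congr 1
  refine Finset.sum_congr rfl fun x _ => ?_
  rw [← Summable.tsum_add (hf x) (hg x)]
  rfl

lemma corrSum_const_mul {k : ℕ} (c : ℝ) (f : (Fin (k - 1) → ℝ) → ℝ) (ϑ : ℕ → ℝ) (N : ℕ) :
    corrSum k (fun z => c * f z) ϑ N = c * corrSum k f ϑ N := by
  have h : ∀ x, ∑' m, term k (fun z => c * f z) ϑ N x m = c * ∑' m, term k f ϑ N x m :=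
    fun x => by rw [← tsum_mul_left]; rfl
  simp only [corrSum_eq, S, h, ← Finset.mul_sum]
  ring

end CorrAux
namespace CorrAux

variable {E : Type*} [NormedAddCommGroup E] [NormedSpace ℝ E]

lemma key_upper {f χ : E → ℝ} {L : NNReal} {R c e : ℝ}
    (hL : LipschitzWith L f) (hR0 : 0 ≤ R) (hR : ∀ z, R < ‖z‖ → f z = 0)
    (hχ1 : ∀ z, ‖z‖ ≤ 2 * R → χ z = 1) (hχ0 : ∀ z, 0 ≤ χ z)
    (hc : 1 / 2 ≤ c) (hc1 : c ≤ 1) (he : 2 * L * R * (1 - c) ≤ e) (z : E) :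
    f (c • z) ≤ f z + e * χ z := by
  have hL0 : (0 : ℝ) ≤ L := L.2
  by_cases h : ‖z‖ ≤ 2 * R
  · have hd := hL.dist_le_mul (c • z) z
    rw [Real.dist_eq, dist_eq_norm] at hd
    have hn : ‖c • z - z‖ = (1 - c) * ‖z‖ := by
      have : c • z - z = (c - 1) • z := by rw [sub_smul, one_smul]
      rw [this, norm_smul, Real.norm_eq_abs, abs_of_nonpos (by linarith)]
      ring
    rw [hn] at hd
    have h1 := abs_le.1 hd
    have hc1' : χ z = 1 := hχ1 z h
    rw [hc1', mul_one]
    have e1 : (0:ℝ) ≤ (L:ℝ) * (1 - c) := mul_nonneg hL0 (by linarith)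
    have e2 := mul_le_mul_of_nonneg_left h e1
    nlinarith [h1.2]
  · push_neg at h
    have hz0 : f z = 0 := hR z (by linarith)
    have hcz : f (c • z) = 0 := by
      apply hR
      rw [norm_smul, Real.norm_eq_abs, abs_of_nonneg (by linarith)]
      nlinarith
    have h0 : (0:ℝ) ≤ 2 * L * R * (1 - c) :=
      mul_nonneg (mul_nonneg (mul_nonneg two_pos.le hL0) hR0) (by linarith)
    rw [hz0, hcz, zero_add]
    exact mul_nonneg (le_trans h0 he) (hχ0 z)

lemma key_lower {f χ : E → ℝ} {L : NNReal} {R c e : ℝ}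
    (hL : LipschitzWith L f) (hR0 : 0 ≤ R) (hR : ∀ z, R < ‖z‖ → f z = 0)
    (hχ1 : ∀ z, ‖z‖ ≤ 2 * R → χ z = 1) (hχ0 : ∀ z, 0 ≤ χ z)
    (hc : 1 ≤ c) (hc2 : c ≤ 2) (he : 2 * L * R * (c - 1) ≤ e) (z : E) :
    f z - e * χ z ≤ f (c • z) := by
  have hL0 : (0 : ℝ) ≤ L := L.2
  by_cases h : ‖z‖ ≤ 2 * R
  · have hd := hL.dist_le_mul (c • z) z
    rw [Real.dist_eq, dist_eq_norm] at hd
    have hn : ‖c • z - z‖ = (c - 1) * ‖z‖ := by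
      have : c • z - z = (c - 1) • z := by rw [sub_smul, one_smul]
      rw [this, norm_smul, Real.norm_eq_abs, abs_of_nonneg (by linarith)]
    rw [hn] at hd
    have h1 := abs_le.1 hd
    have hc1' : χ z = 1 := hχ1 z h
    rw [hc1', mul_one]
    have e1 : (0:ℝ) ≤ (L:ℝ) * (c - 1) := mul_nonneg hL0 (by linarith)
    have e2 := mul_le_mul_of_nonneg_left h e1
    nlinarith [h1.1]
  · push_neg at h
    have hz0 : f z = 0 := hR z (by linarith)
    have hcz : f (c • z) = 0 := by
      apply hR
      rw [norm_smul, Real.norm_eq_abs, abs_of_nonneg (by linarith)]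
      nlinarith
    have h0 : (0:ℝ) ≤ 2 * L * R * (c - 1) :=
      mul_nonneg (mul_nonneg (mul_nonneg two_pos.le hL0) hR0) (by linarith)
    rw [hz0, hcz]
    have := mul_nonneg (le_trans h0 he) (hχ0 z)
    linarith

/-- scaling identity for the argument vectors -/
lemma vec_scale {k : ℕ} (ϑ : ℕ → ℝ) (x : Fin k → ℕ) (m : Fin (k - 1) → ℤ) {N M : ℕ}
    (hM : M ≠ 0) :
    (fun i => (N : ℝ) * (dd k ϑ x i - (m i : ℝ))) =
      ((N : ℝ) / (M : ℝ)) • fun i => (M : ℝ) * (dd k ϑ x i - (m i : ℝ)) := by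
  funext i
  have hM' : (M : ℝ) ≠ 0 := Nat.cast_ne_zero.2 hM
  simp only [Pi.smul_apply, smul_eq_mul]
  field_simp

end CorrAux
namespace CorrAux

variable {k : ℕ} {ϑ : ℕ → ℝ}

/-- Upper bound: for N₁ ≤ N ≤ N₂ with N₂ ≤ 2 N₁. -/
lemma bound_upper {f χ : (Fin (k - 1) → ℝ) → ℝ} {L : NNReal} {R : ℝ}
    (hL : LipschitzWith L f) (hR0 : 0 ≤ R) (hR : ∀ z, R < ‖z‖ → f z = 0)
    (hf0 : ∀ z, 0 ≤ f z)
    (hχ1 : ∀ z, ‖z‖ ≤ 2 * R → χ z = 1) (hχ0 : ∀ z, 0 ≤ χ z)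
    (hχR : ∀ z, 2 * R + 1 < ‖z‖ → χ z = 0)
    {N N₁ N₂ : ℕ} (h1 : 1 ≤ N₁) (h12 : N₁ ≤ N) (h2 : N ≤ N₂) (hh : (N₂ : ℝ) ≤ 2 * N₁) :
    corrSum k f ϑ N ≤ ((N₂ : ℝ) / N₁) *
      (corrSum k f ϑ N₂ + (2 * L * R * (1 - (N₁ : ℝ) / N₂)) * corrSum k χ ϑ N₂) := by
  have hN1 : 1 ≤ N := le_trans h1 h12
  have hN2 : 1 ≤ N₂ := le_trans hN1 h2
  have hN1R : (1:ℝ) ≤ N₁ := by exact_mod_cast h1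
  have hNR : (1:ℝ) ≤ N := by exact_mod_cast hN1
  have hN2R : (1:ℝ) ≤ N₂ := by exact_mod_cast hN2
  have h12R : (N₁:ℝ) ≤ N := by exact_mod_cast h12
  have h2R : (N:ℝ) ≤ N₂ := by exact_mod_cast h2
  set e : ℝ := 2 * L * R * (1 - (N₁ : ℝ) / N₂) with he_def
  have hL0 : (0:ℝ) ≤ L := L.2
  have he0 : 0 ≤ e := by
    apply mul_nonneg (mul_nonneg (mul_nonneg two_pos.le hL0) hR0)
    have h' : (N₁:ℝ)/N₂ ≤ 1 := by rw [div_le_one (by linarith)]; linarith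
    linarith
  set h : (Fin (k - 1) → ℝ) → ℝ := fun z => f z + e * χ z with hh_def
  have hsf : ∀ (M : ℕ), 1 ≤ M → ∀ x, Summable (term k f ϑ M x) :=
    fun M hM x => summable_term hR ϑ hM x
  have hsχ : ∀ (M : ℕ), 1 ≤ M → ∀ x, Summable (term k χ ϑ M x) :=
    fun M hM x => summable_term hχR ϑ hM x
  have hsh : ∀ x, Summable (term k h ϑ N₂ x) := fun x =>
    (hsf N₂ hN2 x).add ((hsχ N₂ hN2 x).mul_left e)
  have hpt : ∀ x m, term k f ϑ N x m ≤ term k h ϑ N₂ x m := by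
    intro x m
    have hv := vec_scale (N := N) (M := N₂) ϑ x m (by omega)
    show f _ ≤ f _ + e * χ _
    rw [hv]
    apply key_upper hL hR0 hR hχ1 hχ0
    · rw [le_div_iff₀ (by linarith)]; linarith
    · rw [div_le_one (by linarith)]; linarith
    · rw [he_def]
      have hdd : (N₁:ℝ)/N₂ ≤ (N:ℝ)/N₂ := by gcongr
      nlinarith [mul_le_mul_of_nonneg_left hdd (mul_nonneg (mul_nonneg two_pos.le hL0) hR0)]
  have hg0 : ∀ x m, 0 ≤ term k h ϑ N₂ x m := fun x m =>
    add_nonneg (hf0 _) (mul_nonneg he0 (hχ0 _))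
  have hS := S_le h2 hpt hg0 (hsf N hN1) hsh
  have hse : ∀ x, Summable (term k (fun z => e * χ z) ϑ N₂ x) := fun x =>
    (hsχ N₂ hN2 x).mul_left e
  have hcorr : corrSum k h ϑ N₂ = corrSum k f ϑ N₂ + e * corrSum k χ ϑ N₂ := by
    rw [hh_def, corrSum_add (hsf N₂ hN2) hse, corrSum_const_mul]
  have hnn : 0 ≤ corrSum k h ϑ N₂ :=
    corrSum_nonneg (fun z => add_nonneg (hf0 z) (mul_nonneg he0 (hχ0 z))) ϑ N₂
  have step1 : corrSum k f ϑ N ≤ ((N₂:ℝ)/N) * corrSum k h ϑ N₂ := by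
    rw [corrSum_eq k f ϑ N]
    have hSh : S k h ϑ N₂ = (N₂:ℝ) * corrSum k h ϑ N₂ := by
      rw [corrSum_eq]; field_simp
    calc (N:ℝ)⁻¹ * S k f ϑ N ≤ (N:ℝ)⁻¹ * S k h ϑ N₂ :=
          mul_le_mul_of_nonneg_left hS (by positivity)
      _ = ((N₂:ℝ)/N) * corrSum k h ϑ N₂ := by rw [hSh]; field_simp
  have step2 : ((N₂:ℝ)/N) * corrSum k h ϑ N₂ ≤ ((N₂:ℝ)/N₁) * corrSum k h ϑ N₂ := by
    apply mul_le_mul_of_nonneg_right _ hnn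
    exact div_le_div_of_nonneg_left (by linarith) (by linarith) h12R
  calc corrSum k f ϑ N ≤ ((N₂:ℝ)/N) * corrSum k h ϑ N₂ := step1
    _ ≤ ((N₂:ℝ)/N₁) * corrSum k h ϑ N₂ := step2
    _ = _ := by rw [hcorr]

end CorrAux
namespace CorrAux

lemma bound_lower {k : ℕ} {ϑ : ℕ → ℝ} {f χ : (Fin (k - 1) → ℝ) → ℝ} {L : NNReal} {R : ℝ}
    (hL : LipschitzWith L f) (hR0 : 0 ≤ R) (hR : ∀ z, R < ‖z‖ → f z = 0)
    (hf0 : ∀ z, 0 ≤ f z)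
    (hχ1 : ∀ z, ‖z‖ ≤ 2 * R → χ z = 1) (hχ0 : ∀ z, 0 ≤ χ z)
    (hχR : ∀ z, 2 * R + 1 < ‖z‖ → χ z = 0)
    {N N₁ N₂ : ℕ} (h1 : 1 ≤ N₁) (h12 : N₁ ≤ N) (h2 : N ≤ N₂) (hh : (N₂ : ℝ) ≤ 2 * N₁) :
    min (((N₁:ℝ)/N₂) * (corrSum k f ϑ N₁ - (2*L*R*((N₂:ℝ)/N₁ - 1)) * corrSum k χ ϑ N₁))
      (corrSum k f ϑ N₁ - (2*L*R*((N₂:ℝ)/N₁ - 1)) * corrSum k χ ϑ N₁) ≤ corrSum k f ϑ N := by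
  have hN1 : 1 ≤ N := le_trans h1 h12
  have hN2 : 1 ≤ N₂ := le_trans hN1 h2
  have hN1R : (1:ℝ) ≤ N₁ := by exact_mod_cast h1
  have hNR : (1:ℝ) ≤ N := by exact_mod_cast hN1
  have hN2R : (1:ℝ) ≤ N₂ := by exact_mod_cast hN2
  have h12R : (N₁:ℝ) ≤ N := by exact_mod_cast h12
  have h2R : (N:ℝ) ≤ N₂ := by exact_mod_cast h2
  set e : ℝ := 2*L*R*((N₂:ℝ)/N₁ - 1) with he_def
  have hL0 : (0:ℝ) ≤ L := L.2
  set g : (Fin (k - 1) → ℝ) → ℝ := fun z => f z + (-e) * χ z with hg_def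
  have hsf : ∀ (M : ℕ), 1 ≤ M → ∀ x, Summable (term k f ϑ M x) :=
    fun M hM x => summable_term hR ϑ hM x
  have hsχ : ∀ (M : ℕ), 1 ≤ M → ∀ x, Summable (term k χ ϑ M x) :=
    fun M hM x => summable_term hχR ϑ hM x
  have hsg : ∀ x, Summable (term k g ϑ N₁ x) := fun x =>
    (hsf N₁ h1 x).add ((hsχ N₁ h1 x).mul_left (-e))
  have hpt : ∀ x m, term k g ϑ N₁ x m ≤ term k f ϑ N x m := by
    intro x m
    have hv := vec_scale (N := N) (M := N₁) ϑ x m (by omega)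
    show f _ + (-e) * χ _ ≤ f _
    rw [hv]
    have key := key_lower (c := (N:ℝ)/N₁) (e := e) hL hR0 hR hχ1 hχ0
      (by rw [le_div_iff₀ (by linarith)]; linarith)
      (by rw [div_le_iff₀ (by linarith)]; linarith)
      (by
        have hdd : (N:ℝ)/N₁ ≤ (N₂:ℝ)/N₁ := by gcongr
        nlinarith [mul_le_mul_of_nonneg_left hdd (mul_nonneg (mul_nonneg two_pos.le hL0) hR0)])
      (fun i => (N₁:ℝ) * (dd k ϑ x i - (m i : ℝ)))
    linarith
  have hf0' : ∀ x m, 0 ≤ term k f ϑ N x m := fun x m => hf0 _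
  have hS := S_le h12 hpt hf0' hsg (hsf N hN1)
  have hse : ∀ x, Summable (term k (fun z => (-e) * χ z) ϑ N₁ x) := fun x =>
    (hsχ N₁ h1 x).mul_left (-e)
  have hcorr : corrSum k g ϑ N₁ = corrSum k f ϑ N₁ - e * corrSum k χ ϑ N₁ := by
    rw [hg_def, corrSum_add (hsf N₁ h1) hse, corrSum_const_mul]
    ring
  have step1 : ((N₁:ℝ)/N) * corrSum k g ϑ N₁ ≤ corrSum k f ϑ N := by
    rw [corrSum_eq k f ϑ N]
    have hSg : S k g ϑ N₁ = (N₁:ℝ) * corrSum k g ϑ N₁ := by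
      rw [corrSum_eq]; field_simp
    calc ((N₁:ℝ)/N) * corrSum k g ϑ N₁ = (N:ℝ)⁻¹ * S k g ϑ N₁ := by
          rw [hSg]; field_simp
      _ ≤ (N:ℝ)⁻¹ * S k f ϑ N := mul_le_mul_of_nonneg_left hS (by positivity)
  refine le_trans ?_ step1
  rw [hcorr]
  set t : ℝ := corrSum k f ϑ N₁ - e * corrSum k χ ϑ N₁ with ht_def
  rcases le_total 0 t with ht | ht
  · refine le_trans (min_le_left _ _) ?_
    apply mul_le_mul_of_nonneg_right _ ht
    gcongr
  · refine le_trans (min_le_right _ _) ?_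
    have hd1 : (N₁:ℝ)/N ≤ 1 := by rw [div_le_one (by linarith)]; linarith
    nlinarith
end CorrAux
namespace CorrAux

lemma tendsto_nonneg (k : ℕ) (hk : 2 ≤ k) (ϑ : ℕ → ℝ)
    (Nm : ℕ → ℕ) (hmono : StrictMono Nm) (hpos : ∀ m, 0 < Nm m)
    (hratio : Tendsto (fun m => (Nm (m + 1) : ℝ) / Nm m) atTop (nhds 1))
    (hsub : ∀ f : (Fin (k - 1) → ℝ) → ℝ, ContDiff ℝ (⊤ : ℕ∞) f → HasCompactSupport f →
      Tendsto (fun m => corrSum k f ϑ (Nm m)) atTop (nhds (∫ x, f x)))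
    (f : (Fin (k - 1) → ℝ) → ℝ) (hsm : ContDiff ℝ (⊤ : ℕ∞) f) (hcs : HasCompactSupport f)
    (hf0 : ∀ z, 0 ≤ f z) :
    Tendsto (fun N => corrSum k f ϑ N) atTop (nhds (∫ x, f x)) := by
  -- support radius
  obtain ⟨r, hr⟩ := hcs.isBounded.subset_closedBall 0
  set R : ℝ := max r 0 + 1 with hR_def
  have hR0 : (0:ℝ) < R := by positivity
  have hRR : ∀ z, R < ‖z‖ → f z = 0 := by
    intro z hz
    apply image_eq_zero_of_notMem_tsupport
    intro hmem
    have := hr hmem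
    rw [Metric.mem_closedBall, dist_zero_right] at this
    have : r ≤ max r 0 := le_max_left _ _
    linarith [ (Metric.mem_closedBall.1 (hr hmem)), dist_zero_right z ▸ (Metric.mem_closedBall.1 (hr hmem)) ]
  -- Lipschitz constant
  have hsm1 : ContDiff ℝ 1 f := hsm.of_le (by exact_mod_cast le_top)
  obtain ⟨L, hL⟩ := hsm1.lipschitzWith_of_hasCompactSupport hcs one_ne_zero
  -- bump function
  set χb : ContDiffBump (0 : Fin (k - 1) → ℝ) := ⟨2*R, 2*R+1, by positivity, by linarith⟩ with hχb
  set χ : (Fin (k - 1) → ℝ) → ℝ := fun z => χb z with hχ_def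
  have hχ1 : ∀ z, ‖z‖ ≤ 2 * R → χ z = 1 := fun z h =>
    χb.one_of_mem_closedBall (by rwa [Metric.mem_closedBall, dist_zero_right])
  have hχ0 : ∀ z, 0 ≤ χ z := fun z => χb.nonneg
  have hχR : ∀ z, 2 * R + 1 < ‖z‖ → χ z = 0 := fun z h =>
    χb.zero_of_le_dist (by rw [dist_zero_right]; exact le_of_lt h)
  have hχsm : ContDiff ℝ (⊤ : ℕ∞) χ := χb.contDiff
  have hχcs : HasCompactSupport χ := χb.hasCompactSupport
  -- subsequential limits
  have Lf := hsub f hsm hcs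
  have Lχ := hsub χ hχsm hχcs
  have Lf' : Tendsto (fun m => corrSum k f ϑ (Nm (m+1))) atTop (nhds (∫ x, f x)) :=
    Lf.comp (tendsto_add_atTop_nat 1)
  have Lχ' : Tendsto (fun m => corrSum k χ ϑ (Nm (m+1))) atTop (nhds (∫ x, χ x)) :=
    Lχ.comp (tendsto_add_atTop_nat 1)
  have hr2 : Tendsto (fun m => (Nm m : ℝ) / Nm (m+1)) atTop (nhds 1) := by
    have h := hratio.inv₀ one_ne_zero
    simp only [inv_div, inv_one] at h
    exact h
  -- upper and lower sequences
  set U : ℕ → ℝ := fun m => ((Nm (m+1) : ℝ) / Nm m) * (corrSum k f ϑ (Nm (m+1)) +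
    (2 * (L:ℝ) * R * (1 - (Nm m : ℝ) / Nm (m+1))) * corrSum k χ ϑ (Nm (m+1))) with hU_def
  set T : ℕ → ℝ := fun m => corrSum k f ϑ (Nm m) -
    (2 * (L:ℝ) * R * ((Nm (m+1) : ℝ) / Nm m - 1)) * corrSum k χ ϑ (Nm m) with hT_def
  set Lo : ℕ → ℝ := fun m => min (((Nm m : ℝ) / Nm (m+1)) * T m) (T m) with hLo_def
  have hU : Tendsto U atTop (nhds (∫ x, f x)) := by
    have h := hratio.mul (Lf'.add
      (((tendsto_const_nhds (x := (2 * (L:ℝ) * R))).mul ((tendsto_const_nhds (x := (1:ℝ))).sub hr2)).mul Lχ'))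
    convert h using 2
    ring
  have hT : Tendsto T atTop (nhds (∫ x, f x)) := by
    have h := Lf.sub
      (((tendsto_const_nhds (x := (2 * (L:ℝ) * R))).mul (hratio.sub (tendsto_const_nhds (x := (1:ℝ))))).mul Lχ)
    convert h using 2
    ring
  have hLo : Tendsto Lo atTop (nhds (∫ x, f x)) := by
    have h := (hr2.mul hT).min hT
    convert h using 2
    rw [one_mul, min_self]
  -- index function
  set φ : ℕ → ℕ := fun N => Nat.findGreatest (fun m => Nm m ≤ N) N with hφ_def
  have hφ_le : ∀ {m N : ℕ}, Nm m ≤ N → m ≤ φ N := fun {m N} h =>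
    Nat.le_findGreatest (P := fun j => Nm j ≤ N) (le_trans hmono.le_apply h) h
  have hφ_spec : ∀ N, Nm 0 ≤ N → Nm (φ N) ≤ N := fun N h =>
    Nat.findGreatest_spec (P := fun j => Nm j ≤ N) (Nat.zero_le N) h
  have hφ_lt : ∀ N, N < Nm (φ N + 1) := by
    intro N
    by_cases hc : φ N + 1 ≤ N
    · by_contra hno
      push_neg at hno
      exact Nat.findGreatest_is_greatest (P := fun j => Nm j ≤ N) (Nat.lt_succ_self _) hc hno
    · push_neg at hc
      calc N < φ N + 1 := hc
        _ ≤ Nm (φ N + 1) := hmono.le_apply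
  have hφ_top : Tendsto φ atTop atTop := by
    rw [tendsto_atTop]
    intro b
    filter_upwards [eventually_ge_atTop (Nm b)] with N h using hφ_le h
  -- ratio eventually below 2
  obtain ⟨m₀, hm₀⟩ := eventually_atTop.1 (hratio.eventually_lt_const one_lt_two)
  -- squeeze
  apply tendsto_of_tendsto_of_tendsto_of_le_of_le' (hLo.comp hφ_top) (hU.comp hφ_top)
  · filter_upwards [eventually_ge_atTop (Nm m₀), eventually_ge_atTop (Nm 0)] with N hA hB
    have hm : m₀ ≤ φ N := hφ_le hA
    have e1 : Nm (φ N) ≤ N := hφ_spec N hB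
    have e2 : N ≤ Nm (φ N + 1) := (hφ_lt N).le
    have e3 : (Nm (φ N + 1) : ℝ) ≤ 2 * Nm (φ N) := by
      have := hm₀ _ hm
      rw [div_lt_iff₀ (by exact_mod_cast hpos (φ N))] at this
      linarith
    exact bound_lower hL hR0.le hRR hf0 hχ1 hχ0 hχR (hpos _) e1 e2 e3
  · filter_upwards [eventually_ge_atTop (Nm m₀), eventually_ge_atTop (Nm 0)] with N hA hB
    have hm : m₀ ≤ φ N := hφ_le hA
    have e1 : Nm (φ N) ≤ N := hφ_spec N hB
    have e2 : N ≤ Nm (φ N + 1) := (hφ_lt N).le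
    have e3 : (Nm (φ N + 1) : ℝ) ≤ 2 * Nm (φ N) := by
      have := hm₀ _ hm
      rw [div_lt_iff₀ (by exact_mod_cast hpos (φ N))] at this
      linarith
    exact bound_upper hL hR0.le hRR hf0 hχ1 hχ0 hχR (hpos _) e1 e2 e3

end CorrAux
namespace CorrAux

lemma tendsto_smooth (k : ℕ) (hk : 2 ≤ k) (ϑ : ℕ → ℝ)
    (Nm : ℕ → ℕ) (hmono : StrictMono Nm) (hpos : ∀ m, 0 < Nm m)
    (hratio : Tendsto (fun m => (Nm (m + 1) : ℝ) / Nm m) atTop (nhds 1))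
    (hsub : ∀ f : (Fin (k - 1) → ℝ) → ℝ, ContDiff ℝ (⊤ : ℕ∞) f → HasCompactSupport f →
      Tendsto (fun m => corrSum k f ϑ (Nm m)) atTop (nhds (∫ x, f x)))
    (f : (Fin (k - 1) → ℝ) → ℝ) (hsm : ContDiff ℝ (⊤ : ℕ∞) f) (hcs : HasCompactSupport f) :
    Tendsto (fun N => corrSum k f ϑ N) atTop (nhds (∫ x, f x)) := by
  obtain ⟨r, hr⟩ := hcs.isBounded.subset_closedBall 0
  set R : ℝ := max r 0 + 1 with hR_def
  have hR0 : (0:ℝ) < R := by positivity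
  have hRR : ∀ z, R < ‖z‖ → f z = 0 := by
    intro z hz
    apply image_eq_zero_of_notMem_tsupport
    intro hmem
    have h1 := Metric.mem_closedBall.1 (hr hmem)
    rw [dist_zero_right] at h1
    have : r ≤ max r 0 := le_max_left _ _
    linarith
  obtain ⟨C₀, hC₀⟩ := hcs.exists_bound_of_continuous hsm.continuous
  set C : ℝ := max C₀ 0 with hC_def
  have hC0 : 0 ≤ C := le_max_right _ _
  have hCf : ∀ z, |f z| ≤ C := fun z => le_trans (by simpa using hC₀ z) (le_max_left _ _)
  -- bump equal to 1 where f can be nonzero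
  set χb : ContDiffBump (0 : Fin (k - 1) → ℝ) := ⟨R, R+1, hR0, by linarith⟩ with hχb
  set χ : (Fin (k - 1) → ℝ) → ℝ := fun z => χb z with hχ_def
  have hχ1 : ∀ z, ‖z‖ ≤ R → χ z = 1 := fun z h =>
    χb.one_of_mem_closedBall (by rwa [Metric.mem_closedBall, dist_zero_right])
  have hχ0 : ∀ z, 0 ≤ χ z := fun z => χb.nonneg
  have hχR : ∀ z, R + 1 < ‖z‖ → χ z = 0 := fun z h =>
    χb.zero_of_le_dist (by rw [dist_zero_right]; exact le_of_lt h)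
  have hχsm : ContDiff ℝ (⊤ : ℕ∞) χ := χb.contDiff
  have hχcs : HasCompactSupport χ := χb.hasCompactSupport
  set F : (Fin (k - 1) → ℝ) → ℝ := fun z => f z + C * χ z with hF_def
  have hFsm : ContDiff ℝ (⊤ : ℕ∞) F := hsm.add (contDiff_const.mul hχsm)
  have hFcs : HasCompactSupport F := hcs.add (hχcs.mul_left (f := fun _ => C))
  have hF0 : ∀ z, 0 ≤ F z := by
    intro z
    by_cases h : ‖z‖ ≤ R
    · have := hCf z
      have h1 := hχ1 z h
      simp only [hF_def, h1, mul_one]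
      cases abs_le.1 (hCf z); linarith
    · push_neg at h
      have h0 : f z = 0 := hRR z h
      simp only [hF_def, h0, zero_add]
      exact mul_nonneg hC0 (hχ0 z)
  have tF := tendsto_nonneg k hk ϑ Nm hmono hpos hratio hsub F hFsm hFcs hF0
  have tχ := tendsto_nonneg k hk ϑ Nm hmono hpos hratio hsub χ hχsm hχcs hχ0
  have key : Tendsto (fun N => corrSum k F ϑ N - C * corrSum k χ ϑ N) atTop
      (nhds ((∫ x, F x) - C * ∫ x, χ x)) := tF.sub (tχ.const_mul C)
  have heq : ∀ᶠ N in atTop, corrSum k F ϑ N - C * corrSum k χ ϑ N = corrSum k f ϑ N := by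
    filter_upwards [eventually_ge_atTop 1] with N hN
    have h1 := corrSum_add (k := k) (ϑ := ϑ) (N := N) (f := f) (g := fun z => C * χ z)
      (fun x => summable_term hRR ϑ hN x)
      (fun x => (summable_term hχR ϑ hN x).mul_left C)
    rw [corrSum_const_mul] at h1
    have h2 : corrSum k F ϑ N = corrSum k f ϑ N + C * corrSum k χ ϑ N := h1
    rw [h2]; ring
  have hval : (∫ x, F x) - C * ∫ x, χ x = ∫ x, f x := by
    have hf_int : Integrable f volume := hsm.continuous.integrable_of_hasCompactSupport hcs
    have hχ_int : Integrable χ volume := hχsm.continuous.integrable_of_hasCompactSupport hχcs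
    rw [hF_def]
    rw [integral_add hf_int (hχ_int.const_mul C), MeasureTheory.integral_const_mul]
    ring
  rw [← hval]
  exact Tendsto.congr' heq key

end CorrAux
namespace CorrAux

lemma corrSum_mono {k : ℕ} {ϑ : ℕ → ℝ} {f g : (Fin (k - 1) → ℝ) → ℝ} {N : ℕ}
    (hpt : ∀ z, f z ≤ g z) (hg0 : ∀ z, 0 ≤ g z)
    (hsf : ∀ x, Summable (term k f ϑ N x)) (hsg : ∀ x, Summable (term k g ϑ N x)) :
    corrSum k f ϑ N ≤ corrSum k g ϑ N := by
  rw [corrSum_eq, corrSum_eq]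
  exact mul_le_mul_of_nonneg_left
    (S_le le_rfl (fun x m => hpt _) (fun x m => hg0 _) hsf hsg) (by positivity)

lemma box_upper {k : ℕ} (hk : 2 ≤ k) (a b : Fin (k - 1) → ℝ) (hab : a ≤ b) {ε : ℝ} (hε : 0 < ε) :
    ∃ g : (Fin (k - 1) → ℝ) → ℝ, ContDiff ℝ (⊤ : ℕ∞) g ∧ HasCompactSupport g ∧
      (∀ z, 0 ≤ g z) ∧ (∀ z, (Set.Icc a b).indicator (fun _ => (1:ℝ)) z ≤ g z) ∧
      (∫ z, g z) ≤ (volume (Set.Icc a b)).toReal + ε := by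
  set v : ℝ := (volume (Set.Icc a b)).toReal with hv_def
  have hvol : v = ∏ i, (b i - a i) := Real.volume_Icc_pi_toReal hab
  -- choose δ
  set P : ℝ → ℝ := fun t => ∏ i, ((b i - a i) + 4 * t) with hP_def
  have hPc : Continuous P := continuous_finset_prod _ fun i _ => by continuity
  have hP0 : P 0 = v := by rw [hP_def, hvol]; simp
  have hev : ∀ᶠ t in nhds (0:ℝ), P t < v + ε :=
    (hPc.tendsto 0).eventually_lt_const (by rw [hP0]; linarith)
  obtain ⟨δ₀, hδ₀, hδ₀'⟩ := Metric.eventually_nhds_iff.1 hev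
  set δ : ℝ := δ₀ / 2 with hδ_def
  have hδ : 0 < δ := half_pos hδ₀
  have hPδ : P δ < v + ε := hδ₀' (by
    rw [Real.dist_eq, sub_zero, abs_of_pos hδ, hδ_def]; linarith)
  set c : Fin (k - 1) → ℝ := fun i => (a i + b i) / 2 with hc_def
  have hr0 : ∀ i, 0 ≤ (b i - a i) / 2 := fun i => by have := hab i; linarith
  set ψ : ∀ i : Fin (k - 1), ContDiffBump (c i) := fun i =>
    ⟨(b i - a i)/2 + δ, (b i - a i)/2 + 2*δ, by have := hr0 i; linarith, by linarith⟩ with hψ_def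
  set g : (Fin (k - 1) → ℝ) → ℝ := fun z => ∏ i, ψ i (z i) with hg_def
  set A : Fin (k - 1) → ℝ := fun i => a i - 2*δ with hA_def
  set B : Fin (k - 1) → ℝ := fun i => b i + 2*δ with hB_def
  have hAB : A ≤ B := fun i => by have := hab i; simp only [hA_def, hB_def]; linarith
  have hzero : ∀ z, z ∉ Set.Icc A B → g z = 0 := by
    intro z hz
    have hex : ∃ i, z i < A i ∨ B i < z i := by
      by_contra hcon
      push_neg at hcon
      exact hz (Set.mem_Icc.2 ⟨fun i => (hcon i).1, fun i => (hcon i).2⟩)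
    obtain ⟨i, hi⟩ := hex
    refine Finset.prod_eq_zero (Finset.mem_univ i) ((ψ i).zero_of_le_dist ?_)
    rw [Real.dist_eq]
    rcases hi with h | h
    · rw [abs_of_neg (by simp only [hA_def] at h; have := hab i; simp only [hc_def]; linarith)]
      simp only [hA_def] at h; simp only [hc_def, hψ_def]; linarith
    · rw [abs_of_pos (by simp only [hB_def] at h; have := hab i; simp only [hc_def]; linarith)]
      simp only [hB_def] at h; simp only [hc_def, hψ_def]; linarith
  have hsm : ContDiff ℝ (⊤ : ℕ∞) g :=
    contDiff_prod fun i _ => (ψ i).contDiff.comp (contDiff_apply ℝ ℝ i)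
  have hcs : HasCompactSupport g := HasCompactSupport.intro isCompact_Icc hzero
  have hg0 : ∀ z, 0 ≤ g z := fun z => Finset.prod_nonneg fun i _ => (ψ i).nonneg
  have hind : ∀ z, (Set.Icc a b).indicator (fun _ => (1:ℝ)) z ≤ g z := by
    intro z
    by_cases hz : z ∈ Set.Icc a b
    · rw [Set.indicator_of_mem hz]
      have hone : g z = 1 := Finset.prod_eq_one fun i _ => (ψ i).one_of_mem_closedBall (by
        rw [Metric.mem_closedBall, Real.dist_eq, abs_le]
        have h1 := hz.1 i; have h2 := hz.2 i
        constructor <;> simp only [hc_def, hψ_def] <;> linarith)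
      rw [hone]
    · rw [Set.indicator_of_notMem hz]; exact hg0 z
  have hle2 : ∀ z, g z ≤ (Set.Icc A B).indicator (fun _ => (1:ℝ)) z := by
    intro z
    by_cases hz : z ∈ Set.Icc A B
    · rw [Set.indicator_of_mem hz]
      exact Finset.prod_le_one (fun i _ => (ψ i).nonneg) (fun i _ => (ψ i).le_one)
    · rw [Set.indicator_of_notMem hz]; exact le_of_eq (hzero z hz)
  refine ⟨g, hsm, hcs, hg0, hind, ?_⟩
  have hg_int : Integrable g volume := hsm.continuous.integrable_of_hasCompactSupport hcs
  have hind_int : Integrable ((Set.Icc A B).indicator fun _ => (1:ℝ)) volume :=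
    (integrable_indicator_iff measurableSet_Icc).2
      (integrableOn_const isCompact_Icc.measure_lt_top.ne)
  calc (∫ z, g z) ≤ ∫ z, (Set.Icc A B).indicator (fun _ => (1:ℝ)) z :=
        integral_mono hg_int hind_int hle2
    _ = (volume (Set.Icc A B)).toReal := by
        rw [MeasureTheory.integral_indicator_const _ measurableSet_Icc]; simp [measureReal_def]
    _ = ∏ i, (B i - A i) := Real.volume_Icc_pi_toReal hAB
    _ = P δ := Finset.prod_congr rfl fun i _ => by simp only [hA_def, hB_def, hP_def]; ring
    _ ≤ v + ε := le_of_lt hPδ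

lemma box_lower {k : ℕ} (hk : 2 ≤ k) (a b : Fin (k - 1) → ℝ) (hab : a ≤ b) {ε : ℝ} (hε : 0 < ε) :
    ∃ g : (Fin (k - 1) → ℝ) → ℝ, ContDiff ℝ (⊤ : ℕ∞) g ∧ HasCompactSupport g ∧
      (∀ z, 0 ≤ g z) ∧ (∀ z, g z ≤ (Set.Icc a b).indicator (fun _ => (1:ℝ)) z) ∧
      (volume (Set.Icc a b)).toReal - ε ≤ ∫ z, g z := by
  set v : ℝ := (volume (Set.Icc a b)).toReal with hv_def
  have hvol : v = ∏ i, (b i - a i) := Real.volume_Icc_pi_toReal hab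
  by_cases hpos : ∀ i, 0 < b i - a i
  swap
  · -- degenerate box: volume zero, take g = 0
    push_neg at hpos
    obtain ⟨i, hi⟩ := hpos
    have hv0 : v = 0 := by
      rw [hvol]
      exact Finset.prod_eq_zero (Finset.mem_univ i) (by have := hab i; linarith)
    refine ⟨fun _ => 0, contDiff_const, HasCompactSupport.intro (isCompact_Icc (a := a) (b := b))
      (fun _ _ => rfl), fun z => le_rfl, fun z => Set.indicator_nonneg (fun _ _ => zero_le_one) z, ?_⟩
    rw [integral_zero, hv0]
    linarith
  · have hne : (Finset.univ : Finset (Fin (k - 1))).Nonempty := ⟨⟨0, by omega⟩, Finset.mem_univ _⟩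
    set m : ℝ := Finset.univ.inf' hne (fun i => b i - a i) with hm_def
    have hm : ∀ i, m ≤ b i - a i := fun i => Finset.inf'_le _ (Finset.mem_univ i)
    have hm0 : 0 < m := (Finset.lt_inf'_iff hne).2 fun i _ => hpos i
    set P : ℝ → ℝ := fun t => ∏ i, ((b i - a i) - 2 * t) with hP_def
    have hPc : Continuous P := continuous_finset_prod _ fun i _ => by continuity
    have hP0 : P 0 = v := by rw [hP_def, hvol]; simp
    have hev : ∀ᶠ t in nhds (0:ℝ), v - ε < P t :=
      (hPc.tendsto 0).eventually_const_lt (by rw [hP0]; linarith)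
    obtain ⟨δ₀, hδ₀, hδ₀'⟩ := Metric.eventually_nhds_iff.1 hev
    set δ : ℝ := min (δ₀ / 2) (m / 4) with hδ_def
    have hδ : 0 < δ := lt_min (half_pos hδ₀) (by linarith)
    have hδm : δ ≤ m / 4 := min_le_right _ _
    have hPδ : v - ε < P δ := hδ₀' (by
      rw [Real.dist_eq, sub_zero, abs_of_pos hδ]
      calc δ ≤ δ₀ / 2 := min_le_left _ _
        _ < δ₀ := by linarith)
    set c : Fin (k - 1) → ℝ := fun i => (a i + b i) / 2 with hc_def
    have hrin : ∀ i, 0 < (b i - a i)/2 - δ := fun i => by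
      have h1 := hm i; linarith [hm0]
    set ψ : ∀ i : Fin (k - 1), ContDiffBump (c i) := fun i =>
      ⟨(b i - a i)/2 - δ, (b i - a i)/2 - δ/2, hrin i, by linarith⟩ with hψ_def
    set g : (Fin (k - 1) → ℝ) → ℝ := fun z => ∏ i, ψ i (z i) with hg_def
    have hsm : ContDiff ℝ (⊤ : ℕ∞) g :=
      contDiff_prod fun i _ => (ψ i).contDiff.comp (contDiff_apply ℝ ℝ i)
    have hzero : ∀ z, z ∉ Set.Icc a b → g z = 0 := by
      intro z hz
      have hex : ∃ i, z i < a i ∨ b i < z i := by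
        by_contra hcon
        push_neg at hcon
        exact hz (Set.mem_Icc.2 ⟨fun i => (hcon i).1, fun i => (hcon i).2⟩)
      obtain ⟨i, hi⟩ := hex
      refine Finset.prod_eq_zero (Finset.mem_univ i) ((ψ i).zero_of_le_dist ?_)
      rw [Real.dist_eq]
      rcases hi with h | h
      · rw [abs_of_neg (by have := hab i; simp only [hc_def]; linarith)]
        simp only [hc_def, hψ_def]; linarith
      · rw [abs_of_pos (by have := hab i; simp only [hc_def]; linarith)]
        simp only [hc_def, hψ_def]; linarith
    have hcs : HasCompactSupport g := HasCompactSupport.intro isCompact_Icc hzero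
    have hg0 : ∀ z, 0 ≤ g z := fun z => Finset.prod_nonneg fun i _ => (ψ i).nonneg
    have hle : ∀ z, g z ≤ (Set.Icc a b).indicator (fun _ => (1:ℝ)) z := by
      intro z
      by_cases hz : z ∈ Set.Icc a b
      · rw [Set.indicator_of_mem hz]
        exact Finset.prod_le_one (fun i _ => (ψ i).nonneg) (fun i _ => (ψ i).le_one)
      · rw [Set.indicator_of_notMem hz]; exact le_of_eq (hzero z hz)
    refine ⟨g, hsm, hcs, hg0, hle, ?_⟩
    set A : Fin (k - 1) → ℝ := fun i => a i + δ with hA_def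
    set B : Fin (k - 1) → ℝ := fun i => b i - δ with hB_def
    have hAB : A ≤ B := fun i => by
      have := hm i; simp only [hA_def, hB_def]; linarith [hm0]
    have hge : ∀ z, (Set.Icc A B).indicator (fun _ => (1:ℝ)) z ≤ g z := by
      intro z
      by_cases hz : z ∈ Set.Icc A B
      · rw [Set.indicator_of_mem hz]
        have hone : g z = 1 := Finset.prod_eq_one fun i _ => (ψ i).one_of_mem_closedBall (by
          rw [Metric.mem_closedBall, Real.dist_eq, abs_le]
          have h1 := hz.1 i; have h2 := hz.2 i
          simp only [hA_def] at h1; simp only [hB_def] at h2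
          constructor <;> simp only [hc_def, hψ_def] <;> linarith)
        rw [hone]
      · rw [Set.indicator_of_notMem hz]; exact hg0 z
    have hg_int : Integrable g volume := hsm.continuous.integrable_of_hasCompactSupport hcs
    have hind_int : Integrable ((Set.Icc A B).indicator fun _ => (1:ℝ)) volume :=
      (integrable_indicator_iff measurableSet_Icc).2
        (integrableOn_const isCompact_Icc.measure_lt_top.ne)
    have : P δ ≤ ∫ z, g z := by
      calc P δ = ∏ i, (B i - A i) :=
            Finset.prod_congr rfl fun i _ => by simp only [hA_def, hB_def, hP_def]; ring
        _ = (volume (Set.Icc A B)).toReal := (Real.volume_Icc_pi_toReal hAB).symm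
        _ = ∫ z, (Set.Icc A B).indicator (fun _ => (1:ℝ)) z := by
            rw [MeasureTheory.integral_indicator_const _ measurableSet_Icc]; simp [measureReal_def]
        _ ≤ ∫ z, g z := integral_mono hind_int hg_int hge
    linarith

end CorrAux
theorem subsequence_to_full_convergence (k : ℕ) (hk : 2 ≤ k) (ϑ : ℕ → ℝ)
    (Nm : ℕ → ℕ) (hmono : StrictMono Nm) (hpos : ∀ m, 0 < Nm m)
    (hratio : Tendsto (fun m => (Nm (m + 1) : ℝ) / Nm m) atTop (nhds 1))
    (hsub : ∀ f : (Fin (k - 1) → ℝ) → ℝ, ContDiff ℝ (⊤ : ℕ∞) f → HasCompactSupport f →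
      Tendsto (fun m => corrSum k f ϑ (Nm m)) atTop (nhds (∫ x, f x))) :
    (∀ f : (Fin (k - 1) → ℝ) → ℝ, ContDiff ℝ (⊤ : ℕ∞) f → HasCompactSupport f →
      Tendsto (fun N => corrSum k f ϑ N) atTop (nhds (∫ x, f x))) ∧
      ∀ a b : Fin (k - 1) → ℝ,
        Tendsto (fun N => corrSum k ((Set.Icc a b).indicator fun _ => (1 : ℝ)) ϑ N) atTop
          (nhds (∫ x, (Set.Icc a b).indicator (fun _ => (1 : ℝ)) x)) := by
  have part1 : ∀ f : (Fin (k - 1) → ℝ) → ℝ, ContDiff ℝ (⊤ : ℕ∞) f → HasCompactSupport f →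
      Tendsto (fun N => corrSum k f ϑ N) atTop (nhds (∫ x, f x)) :=
    fun f hf hcs => CorrAux.tendsto_smooth k hk ϑ Nm hmono hpos hratio hsub f hf hcs
  refine ⟨part1, ?_⟩
  intro a b
  by_cases hab : a ≤ b
  swap
  · have h0 : (Set.Icc a b).indicator (fun _ => (1:ℝ)) = fun _ => (0:ℝ) := by
      rw [Set.Icc_eq_empty hab]; simp
    rw [h0]
    have hz : ∀ N, corrSum k (fun _ => (0:ℝ)) ϑ N = 0 := by
      intro N
      rw [CorrAux.corrSum_eq]
      have hS : CorrAux.S k (fun _ => (0:ℝ)) ϑ N = 0 := by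
        apply Finset.sum_eq_zero
        intro x _
        have ht : CorrAux.term k (fun _ => (0:ℝ)) ϑ N x = fun _ => (0:ℝ) := rfl
        rw [ht, tsum_zero]
      rw [hS, mul_zero]
    simp only [hz, integral_zero]
    exact tendsto_const_nhds
  · -- radius helper
    have hrad : ∀ g : (Fin (k - 1) → ℝ) → ℝ, HasCompactSupport g →
        ∃ R : ℝ, ∀ z, R < ‖z‖ → g z = 0 := by
      intro g hg
      obtain ⟨r, hr⟩ := hg.isBounded.subset_closedBall 0
      refine ⟨r, fun z hz => image_eq_zero_of_notMem_tsupport fun hmem => ?_⟩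
      have h1 := Metric.mem_closedBall.1 (hr hmem)
      rw [dist_zero_right] at h1
      linarith
    set v : ℝ := (volume (Set.Icc a b)).toReal with hv_def
    have hval : (∫ x, (Set.Icc a b).indicator (fun _ => (1:ℝ)) x) = v := by
      rw [MeasureTheory.integral_indicator_const _ measurableSet_Icc]; simp [measureReal_def, hv_def]
    rw [hval]
    have hind0 : ∀ z, 0 ≤ (Set.Icc a b).indicator (fun _ => (1:ℝ)) z :=
      fun z => Set.indicator_nonneg (fun _ _ => zero_le_one) z
    have hRind : ∀ z : Fin (k - 1) → ℝ, (‖a‖ + ‖b‖) < ‖z‖ →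
        (Set.Icc a b).indicator (fun _ => (1:ℝ)) z = 0 := by
      intro z hz
      apply Set.indicator_of_notMem
      intro hmem
      have hle : ‖z‖ ≤ ‖a‖ + ‖b‖ := by
        apply pi_norm_le_iff_of_nonneg (by positivity) |>.2
        intro i
        have h1 := hmem.1 i
        have h2 := hmem.2 i
        have ha := norm_le_pi_norm a i
        have hb := norm_le_pi_norm b i
        rw [Real.norm_eq_abs] at ha hb ⊢
        rw [abs_le]
        constructor
        · have := neg_abs_le (a i); linarith [norm_nonneg b]
        · have := le_abs_self (b i); linarith [norm_nonneg a]
      linarith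
    rw [Metric.tendsto_nhds]
    intro ε hε
    obtain ⟨gU, hU1, hU2, hU3, hU4, hU5⟩ := CorrAux.box_upper hk a b hab
      (show (0:ℝ) < ε/4 by linarith)
    obtain ⟨gL, hL1, hL2, hL3, hL4, hL5⟩ := CorrAux.box_lower hk a b hab
      (show (0:ℝ) < ε/4 by linarith)
    obtain ⟨RU, hRU⟩ := hrad gU hU2
    obtain ⟨RL, hRL⟩ := hrad gL hL2
    have eU := Metric.tendsto_nhds.1 (part1 gU hU1 hU2) (ε/4) (by linarith)
    have eL := Metric.tendsto_nhds.1 (part1 gL hL1 hL2) (ε/4) (by linarith)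
    filter_upwards [eU, eL, eventually_ge_atTop 1] with N hdU hdL hN1
    have sInd := fun x => CorrAux.summable_term hRind ϑ hN1 x
    have sU := fun x => CorrAux.summable_term hRU ϑ hN1 x
    have sL := fun x => CorrAux.summable_term hRL ϑ hN1 x
    have mU : corrSum k ((Set.Icc a b).indicator fun _ => (1:ℝ)) ϑ N ≤ corrSum k gU ϑ N :=
      CorrAux.corrSum_mono hU4 hU3 sInd sU
    have mL : corrSum k gL ϑ N ≤ corrSum k ((Set.Icc a b).indicator fun _ => (1:ℝ)) ϑ N :=
      CorrAux.corrSum_mono hL4 hind0 sL sInd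
    rw [Real.dist_eq, abs_lt] at hdU hdL ⊢
    constructor
    · have h1 := hdL.1
      have h2 := hL5
      linarith
    · have h1 := hdU.2
      have h2 := hU5
      linarith
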